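/- Let R be a commutative ring and a, b, c, d, x, y, z, t ∈ R. Let I_W be the ideal generated by g₁ = ax+by, g₂ = az+bt+cx+dy, g₃ = cz+dt, and set Δ₁ = ad−bc, Δ₂ = xt−yz. Then Δ₁·(Δ₁Δ₂ − (az−cx)²) ∈ I_W and Δ₂·(Δ₁Δ₂ − (az−cx)²) ∈ I_W. (This is the Plücker-type relation exhibiting Δ₁Δ₂ as the square (az−cx)² on each component of the variety of isotropic 2×4 matrices, and shows the Plücker image of OGr(2,4) is the conic XZ = Y².) -/
import Mathlib

/-- In a commutative ring `R`, for the isotropy ideal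
`I_W = (ax+by, az+bt+cx+dy, cz+dt)` of the `2×4` matrix `[[a,b,x,y],[c,d,z,t]]`
and the spinor minors `Δ₁ = ad−bc`, `Δ₂ = xt−yz`, the Plücker-type relations
`Δ₁·(Δ₁Δ₂ − (az−cx)²) ∈ I_W` and `Δ₂·(Δ₁Δ₂ − (az−cx)²) ∈ I_W` hold. -/
theorem spinor_square_relation_in_isotropy_ideal (R : Type*) [CommRing R]
    (a b c d x y z t : R) :
    (a*d - b*c) * ((a*d - b*c) * (x*t - y*z) - (a*z - c*x)^2) ∈
      Ideal.span {a*x + b*y, a*z + b*t + c*x + d*y, c*z + d*t} ∧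
    (x*t - y*z) * ((a*d - b*c) * (x*t - y*z) - (a*z - c*x)^2) ∈
      Ideal.span {a*x + b*y, a*z + b*t + c*x + d*y, c*z + d*t} := by
  have h1 : a*x + b*y ∈ Ideal.span {a*x + b*y, a*z + b*t + c*x + d*y, c*z + d*t} :=
    Ideal.subset_span (by simp)
  have h2 : a*z + b*t + c*x + d*y ∈ Ideal.span {a*x + b*y, a*z + b*t + c*x + d*y, c*z + d*t} :=
    Ideal.subset_span (by simp)
  have h3 : c*z + d*t ∈ Ideal.span {a*x + b*y, a*z + b*t + c*x + d*y, c*z + d*t} :=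
    Ideal.subset_span (by simp)
  constructor
  · have he : (a*d - b*c) * ((a*d - b*c) * (x*t - y*z) - (a*z - c*x)^2) =
        (4*a*c*d*z + 2*a*d*d*t - b*c*c*z - c*c*d*x) * (a*x + b*y) +
        (-(a*a*d*z) - 2*a*b*c*z - 2*a*b*d*t + b*c*c*x) * (a*z + b*t + c*x + d*y) +
        (3*a*a*b*z - a*a*d*x + 2*a*b*b*t) * (c*z + d*t) := by ring
    rw [he]
    exact add_mem (add_mem (Ideal.mul_mem_left _ _ h1) (Ideal.mul_mem_left _ _ h2))
      (Ideal.mul_mem_left _ _ h3)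
  · have he : (x*t - y*z) * ((a*d - b*c) * (x*t - y*z) - (a*z - c*x)^2) =
        (-(a*z*z*t) + 2*c*x*z*t - c*y*z*z) * (a*x + b*y) +
        (a*y*z*z - c*x*x*t) * (a*z + b*t + c*x + d*y) +
        (a*x*x*t - 2*a*x*y*z + c*x*x*y) * (c*z + d*t) := by ring
    rw [he]
    exact add_mem (add_mem (Ideal.mul_mem_left _ _ h1) (Ideal.mul_mem_left _ _ h2))
      (Ideal.mul_mem_left _ _ h3)
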